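/- arXiv:2405.14069 — 2 statements merged into one kernel-verified Lean document; each statement's English description precedes it below -/
import Mathlib

section
/- Let ρ₁, ρ₂, ρ₃ be density matrices satisfying the hypotheses of the Goerz–Reich–Koch theorem. Then the functional J_U^{GRK,sd}(Φ) = (1/6)·Σ_{m=1}^3 ‖Φρ_m − Uρ_m U†‖², where ‖·‖ is the Hilbert–Schmidt norm, satisfies: J_U^{GRK,sd}(Φ) ≥ 0 for all quantum channels Φ, and J_U^{GRK,sd}(Φ) = 0 if and only if Φ = Φ_U. -/
open Matrix
open scoped ComplexOrder

noncomputable def extMap (N k : ℕ)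
    (Φ : Matrix (Fin N) (Fin N) ℂ → Matrix (Fin N) (Fin N) ℂ)
    (A : Matrix (Fin N × Fin k) (Fin N × Fin k) ℂ) :
    Matrix (Fin N × Fin k) (Fin N × Fin k) ℂ :=
  Matrix.of fun p q => Φ (Matrix.of fun i j => A (i, p.2) (j, q.2)) p.1 q.1

def CompletelyPositive (N : ℕ)
    (Φ : Matrix (Fin N) (Fin N) ℂ → Matrix (Fin N) (Fin N) ℂ) : Prop :=
  ∀ k : ℕ, ∀ A : Matrix (Fin N × Fin k) (Fin N × Fin k) ℂ,
    A.PosSemidef → (extMap N k Φ A).PosSemidef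

theorem GRKkey (N : ℕ)
    (U : Matrix (Fin N) (Fin N) ℂ) (hU : U ∈ Matrix.unitaryGroup (Fin N) ℂ)
    (φ : Fin N → (Fin N → ℂ))
    (hφ : ∀ m n, star (φ m) ⬝ᵥ φ n = if m = n then 1 else 0)
    (lam : Fin N → ℝ) (hinj : Function.Injective lam)
    (ρ₁ : Matrix (Fin N) (Fin N) ℂ)
    (hρ₁ : ρ₁ = ∑ n, (lam n : ℂ) • Matrix.vecMulVec (φ n) (star (φ n)))
    (ρ₂ : Matrix (Fin N) (Fin N) ℂ)
    (hρ₂herm : ρ₂.IsHermitian) (hρ₂rank : ρ₂.rank = 1)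
    (hρ₂φ : ∀ n, ρ₂ *ᵥ φ n ≠ 0)
    (Φ : Matrix (Fin N) (Fin N) ℂ →ₗ[ℂ] Matrix (Fin N) (Fin N) ℂ)
    (hTP : ∀ ρ, (Φ ρ).trace = ρ.trace)
    (hCP : CompletelyPositive N (⇑Φ))
    (h1 : Φ ρ₁ = U * ρ₁ * Uᴴ) (h2 : Φ ρ₂ = U * ρ₂ * Uᴴ)
    (h3 : Φ (1 : Matrix (Fin N) (Fin N) ℂ) = 1) :
    ∀ Y, Φ Y = U * Y * Uᴴ := by
  have hU1 : Uᴴ * U = 1 := by simpa [Matrix.star_eq_conjTranspose] using hU.1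
  have hU2 : U * Uᴴ = 1 := by simpa [Matrix.star_eq_conjTranspose] using hU.2
  set M : Matrix (Fin N) (Fin N) ℂ := Matrix.of fun i n => φ n i with hMdef
  have hM : Mᴴ * M = 1 := by
    ext m n
    simpa [Matrix.mul_apply, Matrix.conjTranspose_apply, hMdef, Matrix.one_apply,
      dotProduct] using hφ m n
  have hM2 : M * Mᴴ = 1 := mul_eq_one_comm.mp hM
  set V : Matrix (Fin N) (Fin N) ℂ := U * M with hVdef
  have hV1 : Vᴴ * V = 1 := by
    rw [hVdef, Matrix.conjTranspose_mul]
    calc Mᴴ * Uᴴ * (U * M) = Mᴴ * (Uᴴ * U) * M := by noncomm_ring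
    _ = 1 := by rw [hU1, Matrix.mul_one, hM]
  have hV2 : V * Vᴴ = 1 := mul_eq_one_comm.mp hV1
  -- entries of conjugated vecMulVec
  have Lvec0 : ∀ (u w : Fin N → ℂ),
      Mᴴ * Matrix.vecMulVec u w * M = Matrix.vecMulVec (Mᴴ *ᵥ u) (w ᵥ* M) := by
    intro u w
    rw [Matrix.vecMulVec_eq Unit, Matrix.vecMulVec_eq Unit, Matrix.replicateCol_mulVec,
      Matrix.replicateRow_vecMul]
    simp only [Matrix.mul_assoc]
  have Lvec : ∀ (u w : Fin N → ℂ) (k l : Fin N),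
      (Mᴴ * Matrix.vecMulVec u w * M) k l = (star (φ k) ⬝ᵥ u) * (w ⬝ᵥ φ l) := by
    intro u w k l
    rw [Lvec0]
    simp only [Matrix.vecMulVec_apply, Matrix.mulVec, Matrix.vecMul, dotProduct,
      Matrix.conjTranspose_apply, hMdef, Matrix.of_apply, Pi.star_apply]
  have sandwich : ∀ X : Matrix (Fin N) (Fin N) ℂ, M * (Mᴴ * X * M) * Mᴴ = X := by
    intro X
    rw [show M * (Mᴴ * X * M) * Mᴴ = (M * Mᴴ) * X * (M * Mᴴ) by simp only [Matrix.mul_assoc],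
      hM2, Matrix.one_mul, Matrix.mul_one]
  have sandwichV : ∀ X : Matrix (Fin N) (Fin N) ℂ, V * (Vᴴ * X * V) * Vᴴ = X := by
    intro X
    rw [show V * (Vᴴ * X * V) * Vᴴ = (V * Vᴴ) * X * (V * Vᴴ) by simp only [Matrix.mul_assoc],
      hV2, Matrix.one_mul, Matrix.mul_one]
  have hMEM' : ∀ i j, Mᴴ * Matrix.vecMulVec (φ i) (star (φ j)) * M
      = Matrix.single i j (1 : ℂ) := by
    intro i j
    ext k l
    rw [Lvec, hφ k i, hφ j l]
    by_cases h1 : k = i <;> by_cases h2 : j = l <;>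
      simp [h1, h2, Matrix.single, eq_comm, Ne.symm]
  have hMEM : ∀ i j, M * Matrix.single i j (1 : ℂ) * Mᴴ
      = Matrix.vecMulVec (φ i) (star (φ j)) := by
    intro i j
    rw [← hMEM' i j, sandwich]
  -- expansion of any matrix in the vecMulVec basis
  have hexpand : ∀ Y : Matrix (Fin N) (Fin N) ℂ,
      Y = ∑ i, ∑ j, (Mᴴ * Y * M) i j • Matrix.vecMulVec (φ i) (star (φ j)) := by
    intro Y
    conv_lhs => rw [← sandwich Y, Matrix.matrix_eq_sum_single (Mᴴ * Y * M)]
    rw [Matrix.mul_sum, Matrix.sum_mul]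
    refine Finset.sum_congr rfl fun i _ => ?_
    rw [Matrix.mul_sum, Matrix.sum_mul]
    refine Finset.sum_congr rfl fun j _ => ?_
    rw [← hMEM i j]
    have : Matrix.single i j ((Mᴴ * Y * M) i j)
        = (Mᴴ * Y * M) i j • Matrix.single i j (1 : ℂ) := by
      rw [Matrix.smul_single, smul_eq_mul, mul_one]
    rw [this, Matrix.mul_smul, Matrix.smul_mul]
  -- the Choi matrix
  set Cm : Matrix (Fin N × Fin N) (Fin N × Fin N) ℂ :=
    Matrix.of fun p q => (Vᴴ * Φ (Matrix.vecMulVec (φ p.2) (star (φ q.2))) * V) p.1 q.1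
    with hCmdef
  have hCpsd : Cm.PosSemidef := by
    set vv : Fin N × Fin N → ℂ := fun p => φ p.2 p.1 with hvv
    have hA : (Matrix.vecMulVec vv (star vv)).PosSemidef := by
      rw [Matrix.vecMulVec_eq (ι := Unit)]
      have : Matrix.replicateRow Unit (star vv) = (Matrix.replicateCol Unit vv)ᴴ := by ext i j; simp
      rw [this]
      exact Matrix.posSemidef_self_mul_conjTranspose _
    have hB : extMap N N (⇑Φ) (Matrix.vecMulVec vv (star vv))
        = Matrix.of fun p q => Φ (Matrix.vecMulVec (φ p.2) (star (φ q.2))) p.1 q.1 := by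
      ext p q
      show Φ (Matrix.of fun i j => Matrix.vecMulVec vv (star vv) (i, p.2) (j, q.2)) p.1 q.1 = _
      have harg : (Matrix.of fun i j => Matrix.vecMulVec vv (star vv) (i, p.2) (j, q.2))
          = Matrix.vecMulVec (φ p.2) (star (φ q.2)) := by
        ext i j
        simp [Matrix.vecMulVec_apply, hvv]
      rw [harg]
      rfl
    set W : Matrix (Fin N × Fin N) (Fin N × Fin N) ℂ :=
      Matrix.of fun p q => V p.1 q.1 * (if p.2 = q.2 then 1 else 0) with hW
    have star_ite : ∀ (c : Prop) (inst : Decidable c) (a b : ℂ),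
        star (if c then a else b) = if c then star a else star b := by
      intro c inst a b; split_ifs <;> rfl
    have hCW : Cm = Wᴴ * extMap N N (⇑Φ) (Matrix.vecMulVec vv (star vv)) * W := by
      rw [hB]
      ext p q
      simp only [hCmdef, Matrix.of_apply, Matrix.mul_apply, Matrix.conjTranspose_apply, hW,
        Fintype.sum_prod_type, star_mul', star_ite, star_one, star_zero, mul_ite, ite_mul,
        mul_zero, zero_mul, mul_one, one_mul, Finset.sum_ite_eq, Finset.sum_ite_eq',
        Finset.mem_univ, if_true, Finset.sum_mul, Finset.mul_sum]
    rw [hCW]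
    exact (hCP N _ hA).conjTranspose_mul_mul_same W
  -- linearity helpers
  have lin1 : ∀ (c : Fin N → ℂ) (k l : Fin N),
      ∑ i, c i * Cm (k, i) (l, i)
        = (Vᴴ * Φ (∑ i, c i • Matrix.vecMulVec (φ i) (star (φ i))) * V) k l := by
    intro c k l
    rw [map_sum]
    simp only [Matrix.mul_sum, Matrix.sum_mul, Matrix.sum_apply]
    refine Finset.sum_congr rfl fun i _ => ?_
    rw [Φ.map_smul]
    simp only [hCmdef, Matrix.of_apply, Matrix.mul_smul, Matrix.smul_mul, Matrix.smul_apply,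
      smul_eq_mul]
  have lin2 : ∀ (c : Fin N → Fin N → ℂ) (k l : Fin N),
      ∑ i, ∑ j, c i j * Cm (k, i) (l, j)
        = (Vᴴ * Φ (∑ i, ∑ j, c i j • Matrix.vecMulVec (φ i) (star (φ j))) * V) k l := by
    intro c k l
    rw [map_sum]
    simp only [Matrix.mul_sum, Matrix.sum_mul, Matrix.sum_apply]
    refine Finset.sum_congr rfl fun i _ => ?_
    rw [map_sum]
    simp only [Matrix.mul_sum, Matrix.sum_mul, Matrix.sum_apply]
    refine Finset.sum_congr rfl fun j _ => ?_
    rw [Φ.map_smul]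
    simp only [hCmdef, Matrix.of_apply, Matrix.mul_smul, Matrix.smul_mul, Matrix.smul_apply,
      smul_eq_mul]
  -- trace preservation constraint
  have cTP : ∀ i j, ∑ k, Cm (k, i) (k, j) = if i = j then 1 else 0 := by
    intro i j
    have htr : ∀ Y : Matrix (Fin N) (Fin N) ℂ, (Vᴴ * Y * V).trace = Y.trace := by
      intro Y
      rw [Matrix.trace_mul_cycle, hV2, Matrix.one_mul]
    have : ∑ k, Cm (k, i) (k, j) = (Vᴴ * Φ (Matrix.vecMulVec (φ i) (star (φ j))) * V).trace := by
      simp only [hCmdef, Matrix.of_apply, Matrix.trace, Matrix.diag_apply]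
    rw [this, htr, hTP]
    have : (Matrix.vecMulVec (φ i) (star (φ j))).trace = star (φ j) ⬝ᵥ φ i := by
      simp only [Matrix.trace, Matrix.diag_apply, Matrix.vecMulVec_apply, dotProduct,
        Pi.star_apply]
      exact Finset.sum_congr rfl fun a _ => by ring
    rw [this, hφ j i]
    by_cases h : i = j <;> simp [h, Ne.symm, eq_comm]
  -- unitality constraint
  have hone : ∑ i, Matrix.vecMulVec (φ i) (star (φ i)) = (1 : Matrix (Fin N) (Fin N) ℂ) := by
    rw [← hM2]
    ext a b
    simp only [Matrix.sum_apply, Matrix.vecMulVec_apply, Matrix.mul_apply,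
      Matrix.conjTranspose_apply, hMdef, Matrix.of_apply, Pi.star_apply]
  have cU : ∀ k l, ∑ i, Cm (k, i) (l, i) = if k = l then 1 else 0 := by
    intro k l
    have := lin1 (fun _ => 1) k l
    simp only [one_mul, one_smul] at this
    rw [this, hone, h3, Matrix.mul_one, hV1, Matrix.one_apply]
  -- fixed point ρ₁ constraint
  have hρ₁M : Mᴴ * ρ₁ * M = Matrix.of fun k l => if k = l then (lam k : ℂ) else 0 := by
    ext k l
    rw [hρ₁]
    simp only [Matrix.mul_sum, Matrix.sum_mul, Matrix.mul_smul, Matrix.smul_mul,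
      Matrix.sum_apply, Matrix.smul_apply, smul_eq_mul]
    have : ∀ n, (lam n : ℂ) * (Mᴴ * Matrix.vecMulVec (φ n) (star (φ n)) * M) k l
        = (lam n : ℂ) * ((if k = n then 1 else 0) * (if n = l then 1 else 0)) := by
      intro n
      rw [Lvec, hφ k n, hφ n l]
    rw [Finset.sum_congr rfl fun n _ => this n]
    simp only [Matrix.of_apply]
    by_cases h : k = l
    · subst h
      rw [Finset.sum_eq_single k]
      · simp
      · intro n _ hn
        simp [Ne.symm hn]
      · simp
    · rw [if_neg h]
      refine Finset.sum_eq_zero fun n _ => ?_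
      by_cases h1 : k = n
      · subst h1
        simp [h]
      · simp [if_neg h1]
  have cD : ∀ k l, ∑ i, (lam i : ℂ) * Cm (k, i) (l, i) = if k = l then (lam k : ℂ) else 0 := by
    intro k l
    have := lin1 (fun i => (lam i : ℂ)) k l
    rw [this, ← hρ₁, h1]
    have : Vᴴ * (U * ρ₁ * Uᴴ) * V = Mᴴ * ρ₁ * M := by
      rw [hVdef, Matrix.conjTranspose_mul]
      calc Mᴴ * Uᴴ * (U * ρ₁ * Uᴴ) * (U * M)
          = Mᴴ * (Uᴴ * U) * ρ₁ * (Uᴴ * U) * M := by simp only [Matrix.mul_assoc]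
        _ = Mᴴ * ρ₁ * M := by rw [hU1]; simp only [Matrix.mul_one, Matrix.mul_assoc,
              Matrix.one_mul]
    rw [this, hρ₁M]
    rfl
  -- fixed point ρ₂ constraint
  have c2 : ∀ k l, ∑ i, ∑ j, (Mᴴ * ρ₂ * M) i j * Cm (k, i) (l, j) = (Mᴴ * ρ₂ * M) k l := by
    intro k l
    have := lin2 (fun i j => (Mᴴ * ρ₂ * M) i j) k l
    rw [this, ← hexpand ρ₂, h2]
    rw [hVdef, Matrix.conjTranspose_mul]
    calc (Mᴴ * Uᴴ * (U * ρ₂ * Uᴴ) * (U * M)) k l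
        = (Mᴴ * (Uᴴ * U) * ρ₂ * (Uᴴ * U) * M) k l := by simp only [Matrix.mul_assoc]
      _ = (Mᴴ * ρ₂ * M) k l := by rw [hU1]; simp only [Matrix.mul_one, Matrix.mul_assoc,
            Matrix.one_mul]
  -- diagonal entries of the Choi matrix
  have hdiag : ∀ p, 0 ≤ Cm p p := by
    intro p
    have h := hCpsd.diag_nonneg (i := p)
    simpa [Matrix.mulVec_single, dotProduct, Pi.single_apply, apply_ite] using h
  have hdiag_re : ∀ p, 0 ≤ (Cm p p).re := fun p => (Complex.le_def.mp (hdiag p)).1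
  have hdiag_im : ∀ p, (Cm p p).im = 0 := fun p => ((Complex.le_def.mp (hdiag p)).2).symm
  set preal : Fin N → Fin N → ℝ := fun k i => (Cm (k, i) (k, i)).re with hpreal
  have hpnn : ∀ k i, 0 ≤ preal k i := fun k i => hdiag_re (k, i)
  have hs1 : ∀ i, ∑ k, preal k i = 1 := by
    intro i
    have := congrArg Complex.re (cTP i i)
    simpa [Complex.re_sum] using this
  have hs2 : ∀ k, ∑ i, preal k i = 1 := by
    intro k
    have := congrArg Complex.re (cU k k)
    simpa [Complex.re_sum] using this
  have hs3 : ∀ k, ∑ i, lam i * preal k i = lam k := by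
    intro k
    have := congrArg Complex.re (cD k k)
    simpa [Complex.re_sum, Complex.re_ofReal_mul] using this
  have key0 : ∑ k, ∑ i, preal k i * (lam k - lam i) ^ 2 = 0 := by
    have e1 : ∀ k, ∑ i, preal k i * (lam k - lam i) ^ 2
        = lam k ^ 2 * (∑ i, preal k i) - 2 * (lam k * (∑ i, lam i * preal k i))
          + ∑ i, lam i ^ 2 * preal k i := by
      intro k
      rw [Finset.mul_sum, Finset.mul_sum, Finset.mul_sum, ← Finset.sum_sub_distrib,
        ← Finset.sum_add_distrib]
      exact Finset.sum_congr rfl fun i _ => by ring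
    calc ∑ k, ∑ i, preal k i * (lam k - lam i) ^ 2
        = ∑ k, (lam k ^ 2 - 2 * (lam k * lam k) + ∑ i, lam i ^ 2 * preal k i) := by
          refine Finset.sum_congr rfl fun k _ => ?_
          rw [e1 k, hs2 k, hs3 k, mul_one]
      _ = ∑ k, (lam k ^ 2 - 2 * (lam k * lam k)) + ∑ k, ∑ i, lam i ^ 2 * preal k i := by
          rw [← Finset.sum_add_distrib]
      _ = ∑ k, (lam k ^ 2 - 2 * (lam k * lam k)) + ∑ i, lam i ^ 2 := by
          congr 1
          rw [Finset.sum_comm]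
          refine Finset.sum_congr rfl fun i _ => ?_
          rw [← Finset.mul_sum, hs1 i, mul_one]
      _ = 0 := by
          rw [← Finset.sum_add_distrib]
          refine Finset.sum_eq_zero fun k _ => by ring
  have hp0 : ∀ k i, k ≠ i → preal k i = 0 := by
    intro k i hki
    have houter := (Finset.sum_eq_zero_iff_of_nonneg
      (fun k _ => Finset.sum_nonneg fun i _ => mul_nonneg (hpnn k i) (sq_nonneg _))).mp key0
      k (Finset.mem_univ k)
    have hterm := (Finset.sum_eq_zero_iff_of_nonneg
      (fun i _ => mul_nonneg (hpnn k i) (sq_nonneg _))).mp houter i (Finset.mem_univ i)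
    have hl : (lam k - lam i) ^ 2 ≠ 0 := by
      have : lam k ≠ lam i := fun h => hki (hinj h)
      exact pow_ne_zero _ (sub_ne_zero.mpr this)
    exact (mul_eq_zero.mp hterm).resolve_right hl
  have hCdiag0 : ∀ k i, k ≠ i → Cm (k, i) (k, i) = 0 := by
    intro k i hki
    apply Complex.ext
    · simpa using hp0 k i hki
    · simpa using hdiag_im (k, i)
  have hcol0 : ∀ k i, k ≠ i → ∀ q, Cm q (k, i) = 0 := by
    intro k i hki q
    have h0 : star (Pi.single (k, i) (1 : ℂ)) ⬝ᵥ Cm *ᵥ Pi.single (k, i) 1 = 0 := by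
      simp [Matrix.mulVec_single, dotProduct, Pi.single_apply, apply_ite, hCdiag0 k i hki]
    have hv := (hCpsd.dotProduct_mulVec_zero_iff _).mp h0
    have := congrFun hv q
    simpa [Matrix.mulVec_single] using this
  have hrow0 : ∀ k i, k ≠ i → ∀ q, Cm (k, i) q = 0 := by
    intro k i hki q
    rw [← hCpsd.1.apply (k, i) q, hcol0 k i hki q, star_zero]
  -- all entries of Mᴴ ρ₂ M are nonzero
  have hrne : ∀ k l, (Mᴴ * ρ₂ * M) k l ≠ 0 := by
    rw [Matrix.rank_eq_finrank_span_cols, finrank_eq_one_iff'] at hρ₂rank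
    obtain ⟨v0, hv0ne, hv0span⟩ := hρ₂rank
    choose c hc using fun j : Fin N =>
      hv0span ⟨ρ₂ᵀ j, Submodule.subset_span ⟨j, rfl⟩⟩
    set u : Fin N → ℂ := (v0 : Fin N → ℂ) with hu
    have hc' : ∀ j a, c j * u a = ρ₂ a j := by
      intro j a
      have h0 : c j • u = ρ₂ᵀ j := by
        have := congrArg Subtype.val (hc j)
        simpa [hu] using this
      have := congrFun h0 a
      simpa [Pi.smul_apply, smul_eq_mul, Matrix.transpose_apply] using this
    have hune : u ≠ 0 := by
      intro h
      exact hv0ne (Subtype.ext h)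
    obtain ⟨j0, hj0⟩ := Function.ne_iff.mp hune
    have hwn : ∀ n, c ⬝ᵥ φ n ≠ 0 := by
      intro n hcn
      apply hρ₂φ n
      funext a
      have : (ρ₂ *ᵥ φ n) a = u a * (c ⬝ᵥ φ n) := by
        simp only [Matrix.mulVec, dotProduct, Finset.mul_sum]
        exact Finset.sum_congr rfl fun b _ => by rw [← hc' b a]; ring
      rw [this, hcn, mul_zero]
      rfl
    have hherm : ∀ a b, ρ₂ a b = star (ρ₂ b a) := fun a b => (hρ₂herm.apply a b).symm
    have hstar : ∀ k, star (φ k) ⬝ᵥ u ≠ 0 := by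
      intro k h0
      have hiden : (star (φ k) ⬝ᵥ u) * c j0 = star (u j0) * star (c ⬝ᵥ φ k) := by
        simp only [dotProduct, Pi.star_apply, Finset.sum_mul, star_sum, star_mul',
          Finset.mul_sum]
        refine Finset.sum_congr rfl fun a _ => ?_
        have h1 : u a * c j0 = star (u j0) * star (c a) := by
          rw [mul_comm, hc' j0 a, hherm a j0, ← hc' a j0]
          simp [star_mul', mul_comm]
        calc star (φ k a) * u a * c j0 = star (φ k a) * (u a * c j0) := by ring
          _ = star (φ k a) * (star (u j0) * star (c a)) := by rw [h1]
          _ = star (u j0) * (star (c a) * star (φ k a)) := by ring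
      rw [h0, zero_mul] at hiden
      have : star (u j0) * star (c ⬝ᵥ φ k) ≠ 0 :=
        mul_ne_zero (star_ne_zero.mpr hj0) (star_ne_zero.mpr (hwn k))
      exact this hiden.symm
    intro k l
    have hρ₂eq : ρ₂ = Matrix.vecMulVec u c := by
      ext a b
      rw [Matrix.vecMulVec_apply, ← hc' b a, mul_comm]
    rw [hρ₂eq, Lvec]
    exact mul_ne_zero (hstar k) (hwn l)
  -- off-diagonal blocks of the Choi matrix are the identity
  have ht : ∀ k l, Cm (k, k) (l, l) = 1 := by
    intro k l
    have hc2 := c2 k l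
    rw [Finset.sum_eq_single k] at hc2
    · rw [Finset.sum_eq_single l] at hc2
      · exact mul_left_cancel₀ (hrne k l) (by rw [hc2, mul_one])
      · intro j _ hj
        rw [hcol0 l j (Ne.symm hj) (k, k), mul_zero]
      · simp
    · intro i _ hi
      refine Finset.sum_eq_zero fun j _ => ?_
      rw [hrow0 k i (Ne.symm hi) (l, j), mul_zero]
    · simp
  have hfinal : ∀ i j, Vᴴ * Φ (Matrix.vecMulVec (φ i) (star (φ j))) * V
      = Matrix.single i j (1 : ℂ) := by
    intro i j
    ext k l
    have hCe : (Vᴴ * Φ (Matrix.vecMulVec (φ i) (star (φ j))) * V) k l = Cm (k, i) (l, j) := rfl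
    rw [hCe]
    by_cases hki : k = i
    · by_cases hlj : l = j
      · subst hki; subst hlj
        rw [ht k l]
        simp [Matrix.single]
      · rw [hcol0 l j hlj (k, i)]
        have hne : ¬ (i = k ∧ j = l) := fun hh => hlj hh.2.symm
        simp [Matrix.single, hne]
    · rw [hrow0 k i hki (l, j)]
      have hne : ¬ (i = k ∧ j = l) := fun hh => hki hh.1.symm
      simp [Matrix.single, hne]
  have hΦv : ∀ i j, Φ (Matrix.vecMulVec (φ i) (star (φ j)))
      = V * Matrix.single i j (1 : ℂ) * Vᴴ := by
    intro i j
    rw [← hfinal i j, sandwichV]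
  -- conclusion
  intro Y
  have step1 : Φ Y = ∑ i, ∑ j, (Mᴴ * Y * M) i j • (V * Matrix.single i j (1 : ℂ) * Vᴴ) := by
    conv_lhs => rw [hexpand Y]
    rw [map_sum]
    refine Finset.sum_congr rfl fun i _ => ?_
    rw [map_sum]
    refine Finset.sum_congr rfl fun j _ => ?_
    rw [Φ.map_smul, hΦv]
  have step2 : ∑ i, ∑ j, (Mᴴ * Y * M) i j • (V * Matrix.single i j (1 : ℂ) * Vᴴ)
      = V * (Mᴴ * Y * M) * Vᴴ := by
    conv_rhs => rw [Matrix.matrix_eq_sum_single (Mᴴ * Y * M)]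
    rw [Matrix.mul_sum, Matrix.sum_mul]
    refine Finset.sum_congr rfl fun i _ => ?_
    rw [Matrix.mul_sum, Matrix.sum_mul]
    refine Finset.sum_congr rfl fun j _ => ?_
    have : Matrix.single i j ((Mᴴ * Y * M) i j)
        = (Mᴴ * Y * M) i j • Matrix.single i j (1 : ℂ) := by
      rw [Matrix.smul_single, smul_eq_mul, mul_one]
    rw [this, Matrix.mul_smul, Matrix.smul_mul]
  rw [step1, step2, hVdef, Matrix.conjTranspose_mul]
  calc U * M * (Mᴴ * Y * M) * (Mᴴ * Uᴴ)
      = U * ((M * Mᴴ) * Y * (M * Mᴴ)) * Uᴴ := by simp only [Matrix.mul_assoc]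
    _ = U * Y * Uᴴ := by rw [hM2, Matrix.one_mul, Matrix.mul_one]

/-- The channel `ρ ↦ U ρ U†` as a linear map on matrices. -/
noncomputable def conjChan (N : ℕ) (U : Matrix (Fin N) (Fin N) ℂ) :
    Matrix (Fin N) (Fin N) ℂ →ₗ[ℂ] Matrix (Fin N) (Fin N) ℂ where
  toFun ρ := U * ρ * Uᴴ
  map_add' ρ σ := by simp only [Matrix.mul_add, Matrix.add_mul]
  map_smul' a ρ := by simp [Matrix.mul_smul, Matrix.smul_mul]

/-- Squared Hilbert–Schmidt norm of a matrix. -/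
noncomputable def matHSnormSq {N : ℕ} (A : Matrix (Fin N) (Fin N) ℂ) : ℝ :=
  ∑ a, ∑ b, Complex.normSq (A a b)

/-- With `ρ₁, ρ₂, ρ₃` as in the Goerz–Reich–Koch theorem, the functional
`J_U^{GRK,sd}(Φ) = (1/6) Σ_m ‖Φρ_m − Uρ_mU†‖²` is nonnegative on quantum channels and
vanishes iff `Φ = Φ_U`. -/
theorem stmt3 (N : ℕ) (hN : 0 < N)
    (U : Matrix (Fin N) (Fin N) ℂ) (hU : U ∈ Matrix.unitaryGroup (Fin N) ℂ)
    (φ : Fin N → (Fin N → ℂ))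
    (hφ : ∀ m n, star (φ m) ⬝ᵥ φ n = if m = n then 1 else 0)
    (lam : Fin N → ℝ) (hpos : ∀ n, 0 < lam n) (hinj : Function.Injective lam)
    (hsum : ∑ n, lam n = 1)
    (ρ₁ : Matrix (Fin N) (Fin N) ℂ)
    (hρ₁ : ρ₁ = ∑ n, (lam n : ℂ) • Matrix.vecMulVec (φ n) (star (φ n)))
    (ρ₂ : Matrix (Fin N) (Fin N) ℂ)
    (hρ₂herm : ρ₂.IsHermitian) (hρ₂proj : ρ₂ * ρ₂ = ρ₂) (hρ₂rank : ρ₂.rank = 1)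
    (hρ₂φ : ∀ n, ρ₂ *ᵥ φ n ≠ 0)
    (ρ₃ : Matrix (Fin N) (Fin N) ℂ) (hρ₃ : ρ₃ = ((N : ℂ))⁻¹ • (1 : Matrix (Fin N) (Fin N) ℂ))
    (Φ : Matrix (Fin N) (Fin N) ℂ →ₗ[ℂ] Matrix (Fin N) (Fin N) ℂ)
    (hTP : ∀ ρ, (Φ ρ).trace = ρ.trace)
    (hCP : CompletelyPositive N (⇑Φ)) :
    0 ≤ (1 / 6 : ℝ) * (matHSnormSq (Φ ρ₁ - U * ρ₁ * Uᴴ) + matHSnormSq (Φ ρ₂ - U * ρ₂ * Uᴴ) +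
          matHSnormSq (Φ ρ₃ - U * ρ₃ * Uᴴ)) ∧
    ((1 / 6 : ℝ) * (matHSnormSq (Φ ρ₁ - U * ρ₁ * Uᴴ) + matHSnormSq (Φ ρ₂ - U * ρ₂ * Uᴴ) +
          matHSnormSq (Φ ρ₃ - U * ρ₃ * Uᴴ)) = 0 ↔ Φ = conjChan N U) := by
  have hnn : ∀ A : Matrix (Fin N) (Fin N) ℂ, 0 ≤ matHSnormSq A := fun A =>
    Finset.sum_nonneg fun a _ => Finset.sum_nonneg fun b _ => Complex.normSq_nonneg _
  have hzero : ∀ A : Matrix (Fin N) (Fin N) ℂ, matHSnormSq A = 0 → A = 0 := by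
    intro A h
    ext a b
    have h1 := (Finset.sum_eq_zero_iff_of_nonneg
      (fun a (_ : a ∈ Finset.univ) =>
        Finset.sum_nonneg fun b _ => Complex.normSq_nonneg (A a b))).mp h a (Finset.mem_univ a)
    have h2 := (Finset.sum_eq_zero_iff_of_nonneg
      (fun b (_ : b ∈ Finset.univ) => Complex.normSq_nonneg (A a b))).mp h1 b (Finset.mem_univ b)
    simpa [Complex.normSq_eq_zero] using h2
  refine ⟨mul_nonneg (by norm_num) (add_nonneg (add_nonneg (hnn _) (hnn _)) (hnn _)), ?_, ?_⟩
  · intro hJ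
    have hsz : matHSnormSq (Φ ρ₁ - U * ρ₁ * Uᴴ) + matHSnormSq (Φ ρ₂ - U * ρ₂ * Uᴴ) +
        matHSnormSq (Φ ρ₃ - U * ρ₃ * Uᴴ) = 0 := by
      have h6 : (1 / 6 : ℝ) ≠ 0 := by norm_num
      exact (mul_eq_zero.mp hJ).resolve_left h6
    have e1 : Φ ρ₁ = U * ρ₁ * Uᴴ := by
      have hle : matHSnormSq (Φ ρ₁ - U * ρ₁ * Uᴴ) ≤ 0 := by
        have ha := hnn (Φ ρ₂ - U * ρ₂ * Uᴴ)
        have hb := hnn (Φ ρ₃ - U * ρ₃ * Uᴴ)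
        linarith
      exact sub_eq_zero.mp (hzero _ (le_antisymm hle (hnn _)))
    have e2 : Φ ρ₂ = U * ρ₂ * Uᴴ := by
      have hle : matHSnormSq (Φ ρ₂ - U * ρ₂ * Uᴴ) ≤ 0 := by
        have ha := hnn (Φ ρ₁ - U * ρ₁ * Uᴴ)
        have hb := hnn (Φ ρ₃ - U * ρ₃ * Uᴴ)
        linarith
      exact sub_eq_zero.mp (hzero _ (le_antisymm hle (hnn _)))
    have e3 : Φ ρ₃ = U * ρ₃ * Uᴴ := by
      have hle : matHSnormSq (Φ ρ₃ - U * ρ₃ * Uᴴ) ≤ 0 := by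
        have ha := hnn (Φ ρ₁ - U * ρ₁ * Uᴴ)
        have hb := hnn (Φ ρ₂ - U * ρ₂ * Uᴴ)
        linarith
      exact sub_eq_zero.mp (hzero _ (le_antisymm hle (hnn _)))
    have hU2 : U * Uᴴ = 1 := by simpa [Matrix.star_eq_conjTranspose] using hU.2
    have hNc : ((N : ℂ))⁻¹ ≠ 0 := by
      apply inv_ne_zero
      exact_mod_cast Nat.pos_iff_ne_zero.mp hN
    have e3' : Φ (1 : Matrix (Fin N) (Fin N) ℂ) = 1 := by
      rw [hρ₃] at e3
      rw [Φ.map_smul] at e3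
      have hrhs : U * (((N : ℂ))⁻¹ • (1 : Matrix (Fin N) (Fin N) ℂ)) * Uᴴ
          = ((N : ℂ))⁻¹ • (1 : Matrix (Fin N) (Fin N) ℂ) := by
        rw [Matrix.mul_smul, Matrix.smul_mul, Matrix.mul_one, hU2]
      rw [hrhs] at e3
      exact smul_right_injective _ hNc e3
    have hall := GRKkey N U hU φ hφ lam hinj ρ₁ hρ₁ ρ₂ hρ₂herm hρ₂rank hρ₂φ Φ hTP hCP
      e1 e2 e3'
    exact LinearMap.ext fun Y => hall Y
  · intro hΦ
    have hz : ∀ ρ : Matrix (Fin N) (Fin N) ℂ, Φ ρ - U * ρ * Uᴴ = 0 := by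
      intro ρ
      rw [hΦ]
      exact sub_self _
    rw [hz ρ₁, hz ρ₂, hz ρ₃]
    simp [matHSnormSq]
end

section
/- Let A, B be n×n matrices and Δ > 0. Then the derivative of the map u ↦ exp(Δ(A + uB)) at u = 0 equals Δ · ∫₀¹ exp((1−τ)ΔA) B exp(τΔA) dτ. -/
open Matrix

attribute [local instance] Matrix.linftyOpNormedRing Matrix.linftyOpNormedAlgebra

open NormedSpace intervalIntegral in
private theorem stmt15_comp_ofReal {E : Type*} [NormedAddCommGroup E] [NormedSpace ℂ E]
    {e : ℂ → E} {e' : E} {z : ℝ} (hf : HasDerivAt e e' z) :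
    HasDerivAt (fun y : ℝ => e y) e' z := by
  simpa [Function.comp_def] using ((hf.hasFDerivAt.restrictScalars ℝ).comp z Complex.ofRealCLM.hasFDerivAt).hasDerivAt

open NormedSpace in
private theorem stmt15_expDeriv (n : ℕ) (X : Matrix (Fin n) (Fin n) ℂ) (t : ℝ) :
    HasDerivAt (fun s : ℝ => exp (s • X)) (X * exp (t • X)) t := by
  have h := stmt15_comp_ofReal (hasDerivAt_exp_smul_const' (𝕂 := ℂ) X (t : ℂ))
  simp only [Complex.coe_smul] at h
  exact h

open NormedSpace in
private theorem stmt15_expCont (n : ℕ) :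
    Continuous (exp : Matrix (Fin n) (Fin n) ℂ → Matrix (Fin n) (Fin n) ℂ) :=
  exp_continuous

set_option maxHeartbeats 1000000 in
open NormedSpace in
/-- Duhamel-type identity. -/
private theorem stmt15_duhamel (n : ℕ) (A B : Matrix (Fin n) (Fin n) ℂ) (Δ : ℝ) (u : ℝ) :
    exp (Δ • (A + u • B)) - exp (Δ • A)
      = (u * Δ) • ∫ s in (0:ℝ)..(1:ℝ),
          exp (((1 - s) * Δ) • A) * B * exp ((s * Δ) • (A + u • B)) := by
  set X : Matrix (Fin n) (Fin n) ℂ := Δ • A with hX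
  set Y : Matrix (Fin n) (Fin n) ℂ := Δ • (A + u • B) with hY
  have hYX : Y - X = (u * Δ) • B := by
    rw [hX, hY, ← smul_sub, add_sub_cancel_left, smul_smul, mul_comm]
  set g : ℝ → Matrix (Fin n) (Fin n) ℂ := fun s => exp ((1 - s) • X) * exp (s • Y) with hg
  set g' : ℝ → Matrix (Fin n) (Fin n) ℂ :=
    fun s => exp ((1 - s) • X) * ((u * Δ) • B) * exp (s • Y) with hg'
  have hderiv : ∀ s ∈ Set.uIcc (0:ℝ) (1:ℝ), HasDerivAt g (g' s) s := by
    intro s _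
    have h1 : HasDerivAt (fun s : ℝ => exp ((1 - s) • X))
        ((-1 : ℝ) • (X * exp ((1 - s) • X))) s :=
      HasDerivAt.scomp s (stmt15_expDeriv n X (1 - s)) ((hasDerivAt_id s).const_sub 1)
    have h2 : HasDerivAt (fun s : ℝ => exp (s • Y)) (Y * exp (s • Y)) s :=
      stmt15_expDeriv n Y s
    have h := h1.mul h2
    refine h.congr_deriv ?_
    symm
    have hc : X * exp ((1 - s) • X) = exp ((1 - s) • X) * X :=
      (((Commute.refl X).smul_right (1 - s)).exp_right).eq
    rw [hg', ← hYX, hc, neg_one_smul]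
    noncomm_ring [smul_sub, mul_smul_comm, smul_mul_assoc]
  have hcont : Continuous g' := by
    apply Continuous.mul
    · exact ((stmt15_expCont n).comp (by continuity : Continuous fun s : ℝ => (1 - s) • X)).mul
        continuous_const
    · exact (stmt15_expCont n).comp (by continuity : Continuous fun s : ℝ => s • Y)
  have hint := intervalIntegral.integral_eq_sub_of_hasDerivAt hderiv
    (hcont.intervalIntegrable 0 1)
  have hg1 : g 1 = exp Y := by simp [hg]
  have hg0 : g 0 = exp X := by simp [hg]
  rw [hg1, hg0] at hint
  rw [← hint]
  rw [← intervalIntegral.integral_smul]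
  apply intervalIntegral.integral_congr
  intro s _
  show exp ((1 - s) • X) * ((u * Δ) • B) * exp (s • Y)
      = (u * Δ) • (exp (((1 - s) * Δ) • A) * B * exp ((s * Δ) • (A + u • B)))
  rw [hX, hY, smul_smul, smul_smul, mul_smul_comm, smul_mul_assoc]

/-- The derivative of `u ↦ exp(Δ(A + uB))` at `u = 0` is
`Δ·∫₀¹ exp((1−τ)ΔA) B exp(τΔA) dτ`. -/
theorem stmt15 (n : ℕ) (A B : Matrix (Fin n) (Fin n) ℂ) (Δ : ℝ) (hΔ : 0 < Δ) :
    HasDerivAt (fun u : ℝ => NormedSpace.exp (Δ • (A + u • B)))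
      (Δ • ∫ τ in (0:ℝ)..(1:ℝ),
        NormedSpace.exp (((1 - τ) * Δ) • A) * B * NormedSpace.exp ((τ * Δ) • A))
      0 := by
  classical
  set I : ℝ → Matrix (Fin n) (Fin n) ℂ := fun u =>
    ∫ s in (0:ℝ)..(1:ℝ), NormedSpace.exp (((1 - s) * Δ) • A) * B *
      NormedSpace.exp ((s * Δ) • (A + u • B)) with hI
  have hI0 : I 0 = ∫ τ in (0:ℝ)..(1:ℝ),
      NormedSpace.exp (((1 - τ) * Δ) • A) * B * NormedSpace.exp ((τ * Δ) • A) := by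
    simp [hI]
  have hIcont : Continuous I := by
    apply intervalIntegral.continuous_parametric_intervalIntegral_of_continuous'
    apply Continuous.mul
    · apply Continuous.mul
      · exact (stmt15_expCont n).comp
          (by continuity : Continuous fun p : ℝ × ℝ => ((1 - p.2) * Δ) • A)
      · exact continuous_const
    · exact (stmt15_expCont n).comp
        (by continuity : Continuous fun p : ℝ × ℝ => (p.2 * Δ) • (A + p.1 • B))
  rw [← hI0]
  refine hasDerivAt_iff_tendsto_slope.2 ?_
  have hlim : Filter.Tendsto (fun u : ℝ => Δ • I u) (nhdsWithin 0 {(0:ℝ)}ᶜ) (nhds (Δ • I 0)) :=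
    ((hIcont.tendsto 0).const_smul Δ).mono_left nhdsWithin_le_nhds
  apply hlim.congr'
  filter_upwards [self_mem_nhdsWithin] with u hu
  have hu' : u ≠ 0 := hu
  have hslope : slope (fun u : ℝ => NormedSpace.exp (Δ • (A + u • B))) 0 u
      = u⁻¹ • (NormedSpace.exp (Δ • (A + u • B)) - NormedSpace.exp (Δ • (A + (0:ℝ) • B))) := by
    simp [slope, vsub_eq_sub]
  rw [hslope]
  have h0 : NormedSpace.exp (Δ • (A + (0:ℝ) • B)) = NormedSpace.exp (Δ • A) := by
    simp
  rw [h0, stmt15_duhamel n A B Δ u, smul_smul, inv_mul_eq_div, mul_comm u Δ, mul_div_assoc,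
    div_self hu', mul_one]
end
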